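/- For every integer n ≥ 1, the colon ideal (J_n : uv−1) in S equals J_{n−1}; that is, {f ∈ S : (uv−1)·f ∈ J_n} = J_{n−1}. -/

import Mathlib

set_option synthInstance.maxHeartbeats 1000000
set_option maxHeartbeats 1000000

open Pointwise MvPolynomial

/-- The polynomial ring `ℂ[u,v]`. -/
abbrev CuvPoly : Type := MvPolynomial (Fin 2) ℂ

/-- The variable `u`. -/
noncomputable def uP : CuvPoly := X 0

/-- The variable `v`. -/
noncomputable def vP : CuvPoly := X 1

/-- `S`, the `ℂ`-subalgebra of `ℂ[u,v]` generated by `u`, `u³v⁴` and `uv`. -/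
noncomputable def Ssub : Subalgebra ℂ CuvPoly :=
  Algebra.adjoin ℂ {uP, uP ^ 3 * vP ^ 4, uP * vP}

/-- `u` as an element of `S`. -/
noncomputable def U : Ssub := ⟨uP, Algebra.subset_adjoin (by simp)⟩

/-- `u³v⁴` as an element of `S`. -/
noncomputable def Y : Ssub := ⟨uP ^ 3 * vP ^ 4, Algebra.subset_adjoin (by simp)⟩

/-- `uv` as an element of `S`. -/
noncomputable def UV : Ssub := ⟨uP * vP, Algebra.subset_adjoin (by simp)⟩

/-- The ideal `I = ⟨u−1, u³v⁴−1, uv−1⟩` of `S`. -/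
noncomputable def Iid : Ideal Ssub := Ideal.span {U - 1, Y - 1, UV - 1}

/-- The ideal `J_n = I^{n+1}` of `S`. -/
noncomputable def Jid (n : ℕ) : Ideal Ssub := Iid ^ (n + 1)

/-- for every integer `n ≥ 1`, the colon ideal `(J_n : uv−1)` in `S`
equals `J_{n−1}`: `{f ∈ S : (uv−1)·f ∈ J_n} = J_{n−1}`. -/

lemma deg2 (d : Fin 2 →₀ ℕ) : Finsupp.degree d = d 0 + d 1 := by
  rw [Finsupp.degree_apply, Finset.sum_subset (Finset.subset_univ d.support)
    (by intro i _ h; exact Finsupp.notMem_support_iff.mp h), Fin.sum_univ_two]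

/-- the ideal of polynomials all of whose coefficients in degree < n vanish -/
noncomputable def Vid (n : ℕ) : Ideal CuvPoly where
  carrier := {p | ∀ d : Fin 2 →₀ ℕ, d 0 + d 1 < n → coeff d p = 0}
  zero_mem' := by intro d _; simp
  add_mem' := by intro a b ha hb d hd; simp [coeff_add, ha d hd, hb d hd]
  smul_mem' := by
    intro c p hp d hd
    rw [smul_eq_mul, coeff_mul]
    apply Finset.sum_eq_zero
    rintro ⟨d1, d2⟩ hmem
    rw [Finset.HasAntidiagonal.mem_antidiagonal] at hmem
    have h2 : d2 0 + d2 1 < n := by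
      have h0 : d1 0 + d2 0 = d 0 := by rw [← hmem]; simp
      have h1 : d1 1 + d2 1 = d 1 := by rw [← hmem]; simp
      omega
    simp [hp d2 h2]

lemma mem_Vid {n : ℕ} {p : CuvPoly} :
    p ∈ Vid n ↔ ∀ d : Fin 2 →₀ ℕ, d 0 + d 1 < n → coeff d p = 0 := Iff.rfl

lemma Vid_mul {a b : ℕ} {p q : CuvPoly} (hp : p ∈ Vid a) (hq : q ∈ Vid b) :
    p * q ∈ Vid (a + b) := by
  intro d hd
  rw [coeff_mul]
  apply Finset.sum_eq_zero
  rintro ⟨d1, d2⟩ hmem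
  rw [Finset.HasAntidiagonal.mem_antidiagonal] at hmem
  have h0 : d1 0 + d2 0 = d 0 := by rw [← hmem]; simp
  have h1 : d1 1 + d2 1 = d 1 := by rw [← hmem]; simp
  rcases lt_or_ge (d1 0 + d1 1) a with h | h
  · simp [hp d1 h]
  · simp [hq d2 (by omega)]

noncomputable def I0 : Ideal CuvPoly := Ideal.span {X 0, X 1}

lemma I0_pow_eq (n : ℕ) : I0 ^ n = Vid n := by
  apply le_antisymm
  · induction n with
    | zero =>
      intro x _ d hd; omega
    | succ n ih =>
      rw [pow_succ]
      refine Ideal.mul_le.mpr fun r hr s hs => ?_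
      have hs1 : s ∈ Vid 1 := by
        refine Ideal.span_le.mpr ?_ hs
        rintro x (rfl | rfl) <;>
        · intro d hd
          have h0 : d 0 = 0 := by omega
          have h1 : d 1 = 0 := by omega
          have hd0 : d = 0 := by ext i; fin_cases i <;> assumption
          subst hd0
          exact MvPolynomial.coeff_zero_X _
      exact Vid_mul (ih hr) hs1
  · intro x hx
    rw [MvPolynomial.as_sum x]
    apply Ideal.sum_mem
    intro d hd
    have hdeg : n ≤ d 0 + d 1 := by
      by_contra h
      exact (MvPolynomial.mem_support_iff.mp hd) (hx d (by omega))
    have hmon : (monomial d (coeff d x) : CuvPoly) = C (coeff d x) * ((X 0) ^ (d 0) * (X 1) ^ (d 1)) := by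
      have hsum : Finsupp.single (0 : Fin 2) (d 0) + Finsupp.single (1 : Fin 2) (d 1) = d := by
        ext i; fin_cases i <;> simp
      rw [X_pow_eq_monomial, X_pow_eq_monomial, monomial_mul, C_mul_monomial, hsum, mul_one]
      rw [mul_one]
    rw [hmon]
    apply Ideal.mul_mem_left
    have : (X 0 : CuvPoly) ^ (d 0) * (X 1) ^ (d 1) ∈ I0 ^ (d 0 + d 1) := by
      rw [pow_add]
      exact Ideal.mul_mem_mul (Ideal.pow_mem_pow (Ideal.subset_span (by simp)) _)
        (Ideal.pow_mem_pow (Ideal.subset_span (by simp)) _)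
    exact Ideal.pow_le_pow_right hdeg this

lemma Vid_antitone {a b : ℕ} (h : a ≤ b) : Vid b ≤ Vid a := by
  intro p hp d hd; exact hp d (by omega)

lemma hc_eq_zero_of_Vid {k j : ℕ} {p : CuvPoly} (hp : p ∈ Vid k) (hj : j < k) :
    homogeneousComponent j p = 0 := by
  ext d
  rw [coeff_homogeneousComponent, coeff_zero]
  split_ifs with h
  · exact hp d (by rw [deg2] at h; omega)
  · rfl

lemma key_step (h : CuvPoly) (n : ℕ)
    (hyp : ((X 0 + 1) * (X 1 + 1) - 1) * h ∈ Vid (n + 1)) : h ∈ Vid n := by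
  set w : CuvPoly := (X 0 + 1) * (X 1 + 1) - 1 with hw
  have hw1 : w ∈ Vid 1 := by
    intro d hd
    have h0 : d 0 = 0 := by omega
    have h1 : d 1 = 0 := by omega
    have hd0 : d = 0 := by ext i; fin_cases i <;> assumption
    subst hd0
    have : w = X 0 * X 1 + X 0 + X 1 := by rw [hw]; ring
    rw [this]
    simp [coeff_add, MvPolynomial.coeff_zero_X]
    rw [coeff_mul]
    apply Finset.sum_eq_zero
    rintro ⟨d1, d2⟩ hmem
    rw [Finset.HasAntidiagonal.mem_antidiagonal] at hmem
    have h0 : d1 0 + d2 0 = 0 := by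
      have := congrArg (fun f => f 0) hmem; simpa using this
    rcases Nat.eq_zero_of_add_eq_zero_right h0 with h00
    have : coeff d1 (X 0 : CuvPoly) = 0 := by
      rw [coeff_X']
      split_ifs with hx
      · exfalso; rw [← hx] at h00; simp at h00
      · rfl
    simp [this]
  -- show by induction h ∈ Vid m for all m ≤ n
  suffices H : ∀ m, m ≤ n → h ∈ Vid m by exact H n le_rfl
  intro m
  induction m with
  | zero => intro _ d hd; omega
  | succ m ih =>
    intro hmn
    have hVm : h ∈ Vid m := ih (by omega)
    set hm : CuvPoly := homogeneousComponent m h with hhm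
    -- the remainder
    have hrem : h - hm ∈ Vid (m + 1) := by
      intro d hd
      rw [coeff_sub, hhm, coeff_homogeneousComponent]
      rw [deg2]
      split_ifs with hcase
      · ring
      · rw [hVm d (by omega), sub_zero]
    -- homogeneous component m+1 of w * h equals (X0 + X1) * hm
    have hdecomp : w * h = (X 0 + X 1) * hm + (X 0 * X 1) * hm + w * (h - hm) := by
      rw [hw]; ring
    have hc1 : homogeneousComponent (m + 1) ((X 0 + X 1) * hm) = (X 0 + X 1) * hm := by
      have hhom : ((X 0 + X 1) * hm).IsHomogeneous (1 + m) := by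
        exact ((isHomogeneous_X _ _).add (isHomogeneous_X _ _)).mul
          (homogeneousComponent_isHomogeneous m h)
      rw [homogeneousComponent_of_mem ((mem_homogeneousSubmodule _ _).mpr hhom),
        if_pos (by omega)]
    have hc2 : homogeneousComponent (m + 1) ((X 0 * X 1) * hm) = 0 := by
      have hhom : ((X 0 * X 1) * hm).IsHomogeneous (2 + m) := by
        have : (X 0 * X 1 : CuvPoly).IsHomogeneous 2 :=
          (isHomogeneous_X _ _).mul (isHomogeneous_X _ _)
        exact this.mul (homogeneousComponent_isHomogeneous m h)
      rw [homogeneousComponent_of_mem ((mem_homogeneousSubmodule _ _).mpr hhom),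
        if_neg (by omega)]
    have hc3 : homogeneousComponent (m + 1) (w * (h - hm)) = 0 :=
      hc_eq_zero_of_Vid (by simpa [Nat.add_comm] using Vid_mul hw1 hrem) (by omega)
    have hzero : homogeneousComponent (m + 1) (w * h) = 0 :=
      hc_eq_zero_of_Vid hyp (by omega)
    have : (X 0 + X 1) * hm = 0 := by
      have := congrArg (homogeneousComponent (m + 1)) hdecomp
      rw [map_add, map_add, hc1, hc2, hc3, hzero] at this
      simpa using this.symm
    have hm0 : hm = 0 := by
      rcases mul_eq_zero.mp this with hXX | h0
      · exfalso
        have h2 : (aeval (fun _ : Fin 2 => (1:ℂ))) (X 0 + X 1 : CuvPoly) = 2 := by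
          simp; norm_num
        rw [hXX, map_zero] at h2
        norm_num at h2
      · exact h0
    intro d hd
    rcases Nat.lt_succ_iff_lt_or_eq.mp hd with hlt | heq
    · exact hVm d hlt
    · have := congrArg (coeff d) hm0
      rw [hhm, coeff_homogeneousComponent, deg2, if_pos heq, coeff_zero] at this
      exact this

noncomputable def Mid : Ideal CuvPoly := Ideal.span {uP - 1, vP - 1}

-- saturation: every polynomial times a power of u lands in Ssub
lemma sat (c : CuvPoly) : ∃ (k : ℕ) (s : Ssub), uP ^ k * c = (s : CuvPoly) := by
  induction c using MvPolynomial.induction_on with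
  | C a =>
    exact ⟨0, algebraMap ℂ Ssub a, by rw [pow_zero, one_mul]; rfl⟩
  | add p q hp hq =>
    obtain ⟨k1, s1, h1⟩ := hp
    obtain ⟨k2, s2, h2⟩ := hq
    refine ⟨k1 + k2, U ^ k2 * s1 + U ^ k1 * s2, ?_⟩
    push_cast
    have hU : ((U : Ssub) : CuvPoly) = uP := rfl
    rw [hU, ← h1, ← h2]
    ring
  | mul_X p i hp =>
    obtain ⟨k, s, h⟩ := hp
    fin_cases i
    · refine ⟨k, s * U, ?_⟩
      push_cast
      have hU : ((U : Ssub) : CuvPoly) = uP := rfl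
      rw [hU, ← h]
      show uP ^ k * (p * uP) = uP ^ k * p * uP
      ring
    · refine ⟨k + 1, s * UV, ?_⟩
      push_cast
      have hUV : ((UV : Ssub) : CuvPoly) = uP * vP := rfl
      rw [hUV, ← h]
      show uP ^ (k + 1) * (p * vP) = uP ^ k * p * (uP * vP)
      ring

lemma UmU : (U : Ssub) - 1 ∈ Iid := Ideal.subset_span (by simp)
lemma UVmU : (UV : Ssub) - 1 ∈ Iid := Ideal.subset_span (by simp)

-- products of generators of Mid saturate into powers of Iid
lemma sat_set_pow (n : ℕ) :
    ∀ x ∈ (({uP - 1, vP - 1} : Set CuvPoly) ^ n), ∃ (k : ℕ) (y : Ssub),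
      y ∈ Iid ^ n ∧ uP ^ k * x = (y : CuvPoly) := by
  induction n with
  | zero =>
    intro x hx
    rw [pow_zero, Set.mem_one] at hx
    subst hx
    exact ⟨0, 1, by simp, by simp⟩
  | succ n ih =>
    intro x hx
    rw [pow_succ] at hx
    rcases Set.mem_mul.mp hx with ⟨a, ha, b, hb, rfl⟩
    obtain ⟨k, y, hy, hk⟩ := ih a ha
    rcases hb with hb | hb
    · -- b = uP - 1
      refine ⟨k, y * (U - 1), ?_, ?_⟩
      · rw [pow_succ]
        exact Ideal.mul_mem_mul hy UmU
      · push_cast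
        have hU : ((U : Ssub) : CuvPoly) = uP := rfl
        rw [hU, ← hk, hb]
        ring
    · -- b = vP - 1
      rw [Set.mem_singleton_iff] at hb
      refine ⟨k + 1, y * ((UV - 1) - (U - 1)), ?_, ?_⟩
      · rw [pow_succ]
        exact Ideal.mul_mem_mul hy (Ideal.sub_mem _ UVmU UmU)
      · push_cast
        have hU : ((U : Ssub) : CuvPoly) = uP := rfl
        have hUV : ((UV : Ssub) : CuvPoly) = uP * vP := rfl
        rw [hU, hUV, ← hk, hb]
        ring

lemma sat_Mid_pow (n : ℕ) {x : CuvPoly} (hx : x ∈ Mid ^ n) :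
    ∃ (k : ℕ) (y : Ssub), y ∈ Iid ^ n ∧ uP ^ k * x = (y : CuvPoly) := by
  rw [Mid, Ideal.span, Submodule.span_pow] at hx
  refine Submodule.span_induction ?_ ?_ ?_ ?_ hx
  · exact fun z hz => sat_set_pow n z hz
  · exact ⟨0, 0, Ideal.zero_mem _, by simp⟩
  · rintro a b _ _ ⟨k1, y1, hy1, h1⟩ ⟨k2, y2, hy2, h2⟩
    refine ⟨k1 + k2, U ^ k2 * y1 + U ^ k1 * y2, ?_, ?_⟩
    · exact Ideal.add_mem _ (Ideal.mul_mem_left _ _ hy1) (Ideal.mul_mem_left _ _ hy2)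
    · push_cast
      have hU : ((U : Ssub) : CuvPoly) = uP := rfl
      rw [hU, ← h1, ← h2]
      ring
  · rintro c z _ ⟨k, y, hy, h⟩
    obtain ⟨j, s, hs⟩ := sat c
    refine ⟨j + k, s * y, Ideal.mul_mem_left _ _ hy, ?_⟩
    push_cast
    rw [← hs, ← h]
    show uP ^ (j + k) * (c * z) = uP ^ j * c * (uP ^ k * z)
    ring

noncomputable def sigA : CuvPoly →ₐ[ℂ] CuvPoly := aeval (fun i => X i + 1)
noncomputable def tauA : CuvPoly →ₐ[ℂ] CuvPoly := aeval (fun i => X i - 1)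

lemma tau_sigma (x : CuvPoly) : tauA (sigA x) = x := by
  have h : tauA.comp sigA = AlgHom.id ℂ CuvPoly := by
    apply MvPolynomial.algHom_ext
    intro i
    simp [tauA, sigA]
  calc tauA (sigA x) = (tauA.comp sigA) x := rfl
    _ = x := by rw [h]; rfl

lemma map_span_pow (φ : CuvPoly →ₐ[ℂ] CuvPoly) (s : Set CuvPoly) {k : ℕ} {x : CuvPoly}
    (hx : x ∈ (Ideal.span s) ^ k) : φ x ∈ (Ideal.span (φ '' s)) ^ k := by
  have h := Ideal.mem_map_of_mem (φ : CuvPoly →+* CuvPoly) hx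
  rwa [Ideal.map_pow, Ideal.map_span] at h

lemma pow_sub_one_mem (k : ℕ) : (U : Ssub) ^ k - 1 ∈ Iid := by
  induction k with
  | zero => simp
  | succ k ih =>
    have : (U : Ssub) ^ (k + 1) - 1 = U * (U ^ k - 1) + (U - 1) := by ring
    rw [this]
    exact Ideal.add_mem _ (Ideal.mul_mem_left _ _ ih) UmU

lemma descend {A : Type*} [CommRing A] (J : Ideal A) (f e : A) (hfe : f * (1 + e) ∈ J) :
    ∀ j, f * e ^ j ∈ J → f ∈ J := by
  intro j
  induction j with
  | zero => intro h; simpa using h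
  | succ j ih =>
    intro h
    apply ih
    have heq : f * e ^ j = f * (1 + e) * e ^ j - f * e ^ (j + 1) := by ring
    rw [heq]
    exact Ideal.sub_mem _ (Ideal.mul_mem_right _ _ hfe) h

theorem colon_Jid (n : ℕ) (hn : 1 ≤ n) :
    {f : Ssub | (UV - 1) * f ∈ Jid n} = (Jid (n - 1) : Set Ssub) := by
  have hn1 : n - 1 + 1 = n := by omega
  ext f
  simp only [Set.mem_setOf_eq, SetLike.mem_coe]
  rw [Jid, Jid, hn1]
  constructor
  · intro h
    -- Step A: push membership into the polynomial ring
    have hmapA := Ideal.mem_map_of_mem ((Ssub.val : Ssub →ₐ[ℂ] CuvPoly) : Ssub →+* CuvPoly) h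
    rw [Ideal.map_pow] at hmapA
    have hMle : Ideal.map ((Ssub.val : Ssub →ₐ[ℂ] CuvPoly) : Ssub →+* CuvPoly) Iid ≤ Mid := by
      rw [Iid, Ideal.map_span]
      apply Ideal.span_le.mpr
      rintro x ⟨g, hg, rfl⟩
      rcases hg with rfl | rfl | rfl
      · rw [Mid]
        apply Ideal.subset_span
        left
        show ((U : Ssub) : CuvPoly) - 1 = uP - 1
        rfl
      · rw [SetLike.mem_coe, Mid, Ideal.mem_span_pair]
        refine ⟨(uP ^ 2 + uP + 1) * vP ^ 4, vP ^ 3 + vP ^ 2 + vP + 1, ?_⟩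
        show _ = ((Y : Ssub) : CuvPoly) - 1
        show _ = uP ^ 3 * vP ^ 4 - 1
        ring
      · rw [SetLike.mem_coe, Mid, Ideal.mem_span_pair]
        refine ⟨vP, 1, ?_⟩
        show _ = ((UV : Ssub) : CuvPoly) - 1
        show _ = uP * vP - 1
        ring
    have hR : (uP * vP - 1) * (f : CuvPoly) ∈ Mid ^ (n + 1) := by
      have := Ideal.pow_right_mono hMle (n + 1) hmapA
      have hcoe : ((Ssub.val : Ssub →ₐ[ℂ] CuvPoly) : Ssub →+* CuvPoly) ((UV - 1) * f)
          = (uP * vP - 1) * (f : CuvPoly) := by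
        push_cast
        rfl
      rwa [hcoe] at this
    -- Step B: shift and use the graded-domain argument
    have hsig : sigA ((uP * vP - 1) * (f : CuvPoly))
        ∈ (Ideal.span (sigA '' {uP - 1, vP - 1})) ^ (n + 1) := by
      rw [Mid, Ideal.span] at hR
      exact map_span_pow sigA _ hR
    have himg : sigA '' ({uP - 1, vP - 1} : Set CuvPoly) = {X 0, X 1} := by
      rw [Set.image_pair]
      have h1 : sigA (uP - 1) = X 0 := by simp [sigA, uP]
      have h2 : sigA (vP - 1) = X 1 := by simp [sigA, vP]
      rw [h1, h2]
    rw [himg] at hsig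
    have hw : sigA ((uP * vP - 1) * (f : CuvPoly))
        = ((X 0 + 1) * (X 1 + 1) - 1) * sigA (f : CuvPoly) := by
      rw [map_mul]
      congr 1
      simp [sigA, uP, vP]
    rw [hw] at hsig
    have hVid : ((X 0 + 1) * (X 1 + 1) - 1) * sigA (f : CuvPoly) ∈ Vid (n + 1) := by
      rw [← I0_pow_eq]
      exact hsig
    have hfV : sigA (f : CuvPoly) ∈ Vid n := key_step _ n hVid
    have hfI0 : sigA (f : CuvPoly) ∈ (Ideal.span ({X 0, X 1} : Set CuvPoly)) ^ n := by
      rw [← I0_pow_eq] at hfV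
      exact hfV
    have htau : (f : CuvPoly) ∈ Mid ^ n := by
      have := map_span_pow tauA _ hfI0
      have himg2 : tauA '' ({X 0, X 1} : Set CuvPoly) = {uP - 1, vP - 1} := by
        rw [Set.image_pair]
        have h1 : tauA (X 0 : CuvPoly) = uP - 1 := by simp [tauA, uP]
        have h2 : tauA (X 1 : CuvPoly) = vP - 1 := by simp [tauA, vP]
        rw [h1, h2]
      rw [himg2, tau_sigma] at this
      exact this
    -- Step C: pull back into Ssub via u-saturation
    obtain ⟨k, y, hy, hk⟩ := sat_Mid_pow n htau
    have hUk : (U : Ssub) ^ k * f = y := by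
      apply Subtype.ext
      push_cast
      rw [← hk]
      rfl
    -- descent: f * U^k ∈ Iid^n with U^k = 1 + (U^k - 1)
    have hfe : f * (1 + ((U : Ssub) ^ k - 1)) ∈ Iid ^ n := by
      have heq : f * (1 + ((U : Ssub) ^ k - 1)) = U ^ k * f := by ring
      rw [heq, hUk]
      exact hy
    exact descend (Iid ^ n) f (U ^ k - 1) hfe n
      (Ideal.mul_mem_left _ _ (Ideal.pow_mem_pow (pow_sub_one_mem k) n))
  · intro hf
    rw [pow_succ']
    exact Ideal.mul_mem_mul UVmU hf
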